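/- Let x, y, z be nonzero complex numbers with x + y + z = 0, and let r, s, t ≥ 1 be integers with k = r+s+t−1. Then 0 = Σ_{i+j=k, i,j≥1} C(i−1,t−1)C(j−1,s−1)(−1)^{i+r} x^{−i}y^{−j} + Σ_{j+h=k, j,h≥1} C(j−1,r−1)C(h−1,t−1)(−1)^{j+s} y^{−j}z^{−h} + Σ_{h+i=k, h,i≥1} C(h−1,s−1)C(i−1,r−1)(−1)^{h+t} z^{−h}x^{−i}, where C(a,b) denotes the binomial coefficient. -/

import Mathlib

open Complex Finset

noncomputable def auxT (u v : ℂ) (m n p : ℕ) : ℂ :=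
  ∑ q ∈ Finset.HasAntidiagonal.antidiagonal (m + n + p),
    (q.1.choose p : ℂ) * (q.2.choose n : ℂ) * (-1) ^ (q.1 + m) * u ^ (q.1 + 1) * v ^ (q.2 + 1)

lemma auxT_lemB (u v : ℂ) (m n p : ℕ) :
    auxT u v (m+1) n (p+1) = u * (auxT u v m n (p+1) - auxT u v (m+1) n p) := by
  unfold auxT
  rw [show (m+1) + n + (p+1) = (m+n+p+1)+1 by omega,
    Finset.Nat.sum_antidiagonal_succ,
    show m + n + (p+1) = m+n+p+1 by omega,
    show (m+1) + n + p = m+n+p+1 by omega,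
    mul_sub, Finset.mul_sum, Finset.mul_sum, ← Finset.sum_sub_distrib]
  rw [Nat.choose_zero_succ]
  push_cast
  rw [zero_mul, zero_mul, zero_mul, zero_mul, zero_add]
  refine Finset.sum_congr rfl fun q hq => ?_
  rw [Nat.choose_succ_succ]
  push_cast
  ring

lemma auxT_lemC (u v : ℂ) (m n p : ℕ) :
    auxT u v (m+1) (n+1) p = v * (auxT u v (m+1) n p - auxT u v m (n+1) p) := by
  unfold auxT
  rw [show (m+1) + (n+1) + p = (m+n+p+1)+1 by omega,
    Finset.Nat.sum_antidiagonal_succ',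
    show (m+1) + n + p = m+n+p+1 by omega,
    show m + (n+1) + p = m+n+p+1 by omega,
    mul_sub, Finset.mul_sum, Finset.mul_sum, ← Finset.sum_sub_distrib]
  rw [Nat.choose_zero_succ]
  push_cast
  rw [mul_zero, zero_mul, zero_mul, zero_mul, zero_add]
  refine Finset.sum_congr rfl fun q hq => ?_
  rw [Nat.choose_succ_succ]
  push_cast
  ring

lemma auxT_lemA (u v : ℂ) (m n p : ℕ) :
    (u + v) * auxT u v m (n+1) (p+1) = u * v * (auxT u v m n (p+1) - auxT u v m (n+1) p) := by
  unfold auxT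
  rw [show m + (n+1) + (p+1) = (m+n+p+1)+1 by omega,
    show m + n + (p+1) = m+n+p+1 by omega,
    show m + (n+1) + p = m+n+p+1 by omega]
  rw [add_mul, Finset.mul_sum, Finset.mul_sum,
    Finset.Nat.sum_antidiagonal_succ' (f := fun q =>
      u * ((q.1.choose (p+1) : ℂ) * (q.2.choose (n+1) : ℂ) * (-1) ^ (q.1 + m) * u ^ (q.1 + 1) * v ^ (q.2 + 1))),
    Finset.Nat.sum_antidiagonal_succ (f := fun q =>
      v * ((q.1.choose (p+1) : ℂ) * (q.2.choose (n+1) : ℂ) * (-1) ^ (q.1 + m) * u ^ (q.1 + 1) * v ^ (q.2 + 1)))]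
  rw [Nat.choose_zero_succ, Nat.choose_zero_succ]
  push_cast
  rw [mul_zero, zero_mul, zero_mul, zero_mul, mul_zero, zero_mul, zero_mul, zero_mul, zero_mul, mul_zero]
  rw [zero_add, zero_add, mul_sub, Finset.mul_sum, Finset.mul_sum,
    ← Finset.sum_add_distrib, ← Finset.sum_sub_distrib]
  refine Finset.sum_congr rfl fun q hq => ?_
  rw [Nat.choose_succ_succ q.2 n, Nat.choose_succ_succ q.1 p]
  push_cast
  ring

lemma auxT_00m (v w : ℂ) (m : ℕ) : auxT v w 0 0 m = (-1)^m * v^(m+1) * w := by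
  unfold auxT
  rw [show 0 + 0 + m = m by omega, Finset.Nat.sum_antidiagonal_eq_sum_range_succ_mk]
  rw [Finset.sum_eq_single m]
  · simp
  · intro i hi hne
    rw [Nat.choose_eq_zero_of_lt (lt_of_le_of_ne (by simpa [Nat.lt_succ] using hi) hne)]
    simp
  · intro h; exact absurd (Finset.self_mem_range_succ m) h

lemma auxT_0m0 (w u : ℂ) (m : ℕ) : auxT w u 0 m 0 = w * u^(m+1) := by
  unfold auxT
  rw [show 0 + m + 0 = m by omega, Finset.Nat.sum_antidiagonal_eq_sum_range_succ_mk]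
  rw [Finset.sum_eq_single 0]
  · simp
  · intro i hi hne
    have him : i ≤ m := by simpa [Nat.lt_succ] using hi
    rw [Nat.choose_eq_zero_of_lt (show m - i < m by omega)]
    simp
  · intro h; exact absurd (Finset.mem_range.mpr (Nat.succ_pos m)) h

lemma auxT_m00 (u v : ℂ) (m : ℕ) :
    auxT u v m 0 0 = u * v * (-1)^m * (∑ i ∈ Finset.range (m+1), (-u)^i * v^(m+1-1-i)) := by
  unfold auxT
  rw [show m + 0 + 0 = m by omega, Finset.Nat.sum_antidiagonal_eq_sum_range_succ_mk,
    Finset.mul_sum]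
  refine Finset.sum_congr rfl fun i hi => ?_
  have him : i ≤ m := by simpa [Nat.lt_succ] using hi
  rw [Nat.choose_zero_right, Nat.choose_zero_right, neg_pow,
    show m + 1 - 1 - i = m - i from rfl,
    show m - i + 1 = m + 1 - i by omega]
  push_cast
  rw [show m + 1 - i = (m - i) + 1 by omega]
  ring

lemma auxT_boundary (u v w : ℂ) (huv : u + v ≠ 0) (hrel : u*v + v*w + w*u = 0) (m : ℕ) :
    auxT u v m 0 0 + auxT v w 0 0 m + auxT w u 0 m 0 = 0 := by
  have hg := geom_sum₂_mul (-u) v (m+1)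
  rw [neg_pow u (m+1), pow_succ ((-1:ℂ)) m] at hg
  have hA : (-1:ℂ)^m * (-1:ℂ)^m = 1 := by
    rw [← pow_add]; exact Even.neg_one_pow ⟨m, rfl⟩
  have key : (u + v) * (auxT u v m 0 0 + auxT v w 0 0 m + auxT w u 0 m 0) = 0 := by
    rw [auxT_m00, auxT_00m, auxT_0m0]
    linear_combination (-(u*v*(-1:ℂ)^m)) * hg + ((-1:ℂ)^m * v^(m+1) + u^(m+1)) * hrel
      + (u*v*u^(m+1)) * hA
  rcases mul_eq_zero.mp key with h | h
  · exact absurd h huv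
  · exact h

lemma auxT_step (u v w : ℂ) (huv : u + v ≠ 0) (hrel : u*v + v*w + w*u = 0) (m n p : ℕ)
    (I₁ : auxT u v m n (p+1) + auxT v w n (p+1) m + auxT w u (p+1) m n = 0)
    (I₂ : auxT u v m (n+1) p + auxT v w (n+1) p m + auxT w u p m (n+1) = 0) :
    auxT u v m (n+1) (p+1) + auxT v w (n+1) (p+1) m + auxT w u (p+1) m (n+1) = 0 := by
  have hA := auxT_lemA u v m n p
  have hC := auxT_lemC v w n p m
  have hB := auxT_lemB w u p m n
  have key : (u + v) * (auxT u v m (n+1) (p+1) + auxT v w (n+1) (p+1) m + auxT w u (p+1) m (n+1)) = 0 := by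
    linear_combination hA + (u+v)*hC + (u+v)*hB + (u*v)*I₁ - (u*v)*I₂ +
      (auxT v w (n+1) p m + auxT w u p m (n+1) - auxT v w n (p+1) m - auxT w u (p+1) m n) * hrel
  rcases mul_eq_zero.mp key with h | h
  · exact absurd h huv
  · exact h

lemma auxT_sum_ne (u v w : ℂ) (hu : u ≠ 0) (hv : v ≠ 0)
    (hrel : u*v + v*w + w*u = 0) : u + v ≠ 0 := by
  intro h
  have h2 : u * v = 0 := by linear_combination hrel - w * h
  rcases mul_eq_zero.mp h2 with h3 | h3
  · exact hu h3
  · exact hv h3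

lemma auxT_key (κ : ℕ) : ∀ m n p : ℕ, m + n + p = κ → ∀ u v w : ℂ, u ≠ 0 → v ≠ 0 → w ≠ 0 →
    u*v + v*w + w*u = 0 → auxT u v m n p + auxT v w n p m + auxT w u p m n = 0 := by
  induction κ using Nat.strong_induction_on with
  | _ κ IH =>
    intro m n p hκ u v w hu hv hw hrel
    have huv : u + v ≠ 0 := auxT_sum_ne u v w hu hv hrel
    have hvw : v + w ≠ 0 := auxT_sum_ne v w u hv hw (by linear_combination hrel)
    have hwu : w + u ≠ 0 := auxT_sum_ne w u v hw hu (by linear_combination hrel)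
    match n, p with
    | Nat.succ n, Nat.succ p =>
      exact auxT_step u v w huv hrel m n p
        (IH (κ-1) (by omega) m n (p+1) (by omega) u v w hu hv hw hrel)
        (IH (κ-1) (by omega) m (n+1) p (by omega) u v w hu hv hw hrel)
    | Nat.succ n, 0 =>
      match m with
      | 0 =>
        have := auxT_boundary v w u hvw (by linear_combination hrel) (n+1)
        linear_combination this
      | Nat.succ m =>
        have := auxT_step w u v hwu (by linear_combination hrel) 0 m n
          (IH (κ-1) (by omega) 0 m (n+1) (by omega) w u v hw hu hv (by linear_combination hrel))
          (IH (κ-1) (by omega) 0 (m+1) n (by omega) w u v hw hu hv (by linear_combination hrel))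
        linear_combination this
    | 0, Nat.succ p =>
      match m with
      | 0 =>
        have := auxT_boundary w u v hwu (by linear_combination hrel) (p+1)
        linear_combination this
      | Nat.succ m =>
        have := auxT_step v w u hvw (by linear_combination hrel) 0 p m
          (IH (κ-1) (by omega) 0 p (m+1) (by omega) v w u hv hw hu (by linear_combination hrel))
          (IH (κ-1) (by omega) 0 (p+1) m (by omega) v w u hv hw hu (by linear_combination hrel))
        linear_combination this
    | 0, 0 =>
      exact auxT_boundary u v w huv hrel m

lemma auxT_conv (x y : ℂ) (M N P k : ℕ) (hk : k = M + N + P + 2) :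
    (∑ i ∈ Finset.Icc 1 (k - 1), ((i - 1).choose P : ℂ) *
      ((k - i - 1).choose N : ℂ) * (-1) ^ (i + (M + 1)) *
      (x ^ (-(i : ℤ)) * y ^ (-((k - i : ℕ) : ℤ)))) = auxT x⁻¹ y⁻¹ M N P := by
  subst hk
  rw [auxT, Finset.Nat.sum_antidiagonal_eq_sum_range_succ_mk,
    show M + N + P + 2 - 1 = M + N + P + 1 by omega,
    show Finset.Icc 1 (M+N+P+1) = Finset.Ico 1 (M+N+P+2) by rw [← Finset.Ico_add_one_right_eq_Icc]; rfl,
    Finset.sum_Ico_eq_sum_range,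
    show M + N + P + 2 - 1 = (M+N+P) + 1 by omega]
  refine Finset.sum_congr rfl fun i hi => ?_
  have him : i ≤ M + N + P := by simpa [Nat.lt_succ] using hi
  dsimp only
  rw [show 1 + i - 1 = i by omega,
    show M + N + P + 2 - (1 + i) - 1 = M + N + P - i by omega,
    show (M + N + P + 2 - (1 + i) : ℕ) = (M + N + P - i) + 1 by omega,
    show 1 + i + (M + 1) = (i + M) + 2 by omega]
  rw [show (-((1 + i : ℕ):ℤ)) = -(((i+1 : ℕ) : ℤ)) by push_cast; ring,
    zpow_neg, zpow_natCast, zpow_neg, zpow_natCast, ← inv_pow, ← inv_pow]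
  ring

/-- Lemma 3 of Hirose–Sato–Tasaka: for nonzero complex `x, y, z` with `x + y + z = 0`
and integers `r, s, t ≥ 1` with `k = r + s + t - 1`, the three binomial sums of
negative powers vanish. -/
theorem partial_fraction_three_term (x y z : ℂ) (hx : x ≠ 0) (hy : y ≠ 0) (hz : z ≠ 0)
    (hxyz : x + y + z = 0) (r s t : ℕ) (hr : 1 ≤ r) (hs : 1 ≤ s) (ht : 1 ≤ t)
    (k : ℕ) (hk : k = r + s + t - 1) :
    0 = (∑ i ∈ Finset.Icc 1 (k - 1), ((i - 1).choose (t - 1) : ℂ) *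
          ((k - i - 1).choose (s - 1) : ℂ) * (-1) ^ (i + r) *
          (x ^ (-(i : ℤ)) * y ^ (-((k - i : ℕ) : ℤ))))
      + (∑ j ∈ Finset.Icc 1 (k - 1), ((j - 1).choose (r - 1) : ℂ) *
          ((k - j - 1).choose (t - 1) : ℂ) * (-1) ^ (j + s) *
          (y ^ (-(j : ℤ)) * z ^ (-((k - j : ℕ) : ℤ))))
      + (∑ h ∈ Finset.Icc 1 (k - 1), ((h - 1).choose (s - 1) : ℂ) *
          ((k - h - 1).choose (r - 1) : ℂ) * (-1) ^ (h + t) *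
          (z ^ (-(h : ℤ)) * x ^ (-((k - h : ℕ) : ℤ)))) := by
  obtain ⟨m, rfl⟩ : ∃ m, r = m + 1 := ⟨r - 1, by omega⟩
  obtain ⟨n, rfl⟩ : ∃ n, s = n + 1 := ⟨s - 1, by omega⟩
  obtain ⟨p, rfl⟩ : ∃ p, t = p + 1 := ⟨t - 1, by omega⟩
  have hk2 : k = m + n + p + 2 := by omega
  simp only [Nat.add_sub_cancel]
  rw [auxT_conv x y m n p k hk2, auxT_conv y z n p m k (by omega),
    auxT_conv z x p m n k (by omega)]
  have hrel : x⁻¹ * y⁻¹ + y⁻¹ * z⁻¹ + z⁻¹ * x⁻¹ = 0 := by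
    field_simp
    linear_combination hxyz
  exact (auxT_key (m + n + p) m n p rfl x⁻¹ y⁻¹ z⁻¹ (inv_ne_zero hx) (inv_ne_zero hy)
    (inv_ne_zero hz) hrel).symm
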